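/- Let A, B, C, D ∈ ℝ^{n×n}, M = [[C, D],[A, −B]], and define 𝓐₋₁ = [[0, C],[0, A]], 𝓐₀ = [[D, Cᵀ],[−B, Dᵀ]], 𝓐₁ = [[Aᵀ, 0],[−Bᵀ, 0]] (2×2 block form with n×n blocks). Assume the pencil φ(z) = M + zMᵀ is non-critical, i.e., det(M + zMᵀ) ≠ 0 for all z ∈ ℂ with |z| = 1. If G ∈ ℂ^{2n×2n} satisfies 𝓐₋₁ + 𝓐₀G + 𝓐₁G² = 0 and has spectral radius less than 1, then, writing G = [[G₁₁, G₁],[G₂₁, G₂]] in n×n blocks, one has G₁₁ = 0 and G₂₁ = 0, the matrix G₁ satisfies the ⊤-NARE DG₁ + G₁ᵀA − G₁ᵀBG₁ + C = 0, the matrix Dᵀ − BᵀG₁ is invertible, and G₂ = −(Dᵀ − BᵀG₁)⁻¹(A − BG₁). -/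

import Mathlib

open Polynomial
open scoped Matrix



private lemma countP_bind' {α β : Type*} (p : α → Prop) [DecidablePred p]
    (s : Multiset β) (f : β → Multiset α) :
    Multiset.countP p (s.bind f) = (s.map fun b => Multiset.countP p (f b)).sum := by
  induction s using Multiset.induction_on with
  | empty => simp
  | cons a t ih => simp [Multiset.cons_bind, ih]

private lemma sum_map_ite' {α : Type*} (q : α → Prop) [DecidablePred q] (s : Multiset α) :
    (s.map fun a => if q a then (1:ℕ) else 0).sum = Multiset.countP q s := by
  induction s using Multiset.induction_on with
  | empty => simp
  | cons a t ih => by_cases h : q a <;> simp [Multiset.countP_cons, h, ih, add_comm]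

private lemma reflect_one_X_sub_C (a : ℂ) :
    Polynomial.reflect 1 ((X : ℂ[X]) - C a) = 1 - C a * X := by
  rw [Polynomial.reflect_sub, ← pow_one (X : ℂ[X]), Polynomial.reflect_monomial,
    Polynomial.reflect_C]
  norm_num

private lemma reflect_multiset_prod (s : Multiset ℂ) :
    Polynomial.reflect (Multiset.card s) ((s.map fun a => (X:ℂ[X]) - C a).prod)
      = (s.map fun a => 1 - C a * (X:ℂ[X])).prod := by
  induction s using Multiset.induction_on with
  | empty =>
    simp only [Multiset.map_zero, Multiset.prod_zero, Multiset.card_zero]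
    rw [← C_1, Polynomial.reflect_C]; simp
  | cons a t ih =>
    have hdeg : ((t.map fun a => (X:ℂ[X]) - C a).prod).natDegree ≤ Multiset.card t := by
      refine le_trans (Polynomial.natDegree_multiset_prod_le _) ?_
      rw [Multiset.map_map]
      have : ∀ x ∈ t, (Polynomial.natDegree ∘ fun a => (X:ℂ[X]) - C a) x = 1 := by
        intro x _; simp [natDegree_X_sub_C]
      rw [Multiset.map_congr rfl this, Multiset.map_const', Multiset.sum_replicate,
        smul_eq_mul, mul_one]
    simp only [Multiset.map_cons, Multiset.prod_cons, Multiset.card_cons]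
    rw [show Multiset.card t + 1 = 1 + Multiset.card t from add_comm _ _,
      Polynomial.reflect_mul _ _ (le_of_eq (natDegree_X_sub_C a)) hdeg,
      reflect_one_X_sub_C, ih]


private lemma countP_replicate' (p : ℂ → Prop) [DecidablePred p] (n : ℕ) (a : ℂ) (h : p a) :
    Multiset.countP p (Multiset.replicate n a) = n := by
  induction n with
  | zero => simp
  | succ k ih => rw [Multiset.replicate_succ, Multiset.countP_cons, ih, if_pos h]

private lemma two_mul_countP_roots {f : Polynomial ℂ} {N : ℕ} (hf0 : f ≠ 0)
    (hdeg : f.natDegree ≤ N) (hrefl : Polynomial.reflect N f = f)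
    (hcirc : ∀ z : ℂ, ‖z‖ = 1 → f.eval z ≠ 0) :
    2 * Multiset.countP (fun z : ℂ => ‖z‖ < 1) f.roots = N := by
  classical
  have hsplit : f.Splits := IsAlgClosed.splits f
  have hcard : Multiset.card f.roots = f.natDegree := by
    have h := hsplit.natDegree_eq_card_roots
    simpa using h.symm
  have ha : f.leadingCoeff ≠ 0 := Polynomial.leadingCoeff_ne_zero.mpr hf0
  have hfact := Polynomial.C_leadingCoeff_mul_prod_multiset_X_sub_C (p := f) hcard
  set d := f.natDegree with hd
  set rts := f.roots with hrts
  have hP : ((rts.map fun a => (X:ℂ[X]) - C a).prod).natDegree ≤ d := by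
    refine le_trans (Polynomial.natDegree_multiset_prod_le _) ?_
    rw [Multiset.map_map]
    have h1 : ∀ x ∈ rts, (Polynomial.natDegree ∘ fun a => (X:ℂ[X]) - C a) x = 1 := by
      intro x _; simp [natDegree_X_sub_C]
    rw [Multiset.map_congr rfl h1, Multiset.map_const', Multiset.sum_replicate,
      smul_eq_mul, mul_one, hcard]
  have hreflP : Polynomial.reflect N ((rts.map fun a => (X:ℂ[X]) - C a).prod)
      = (rts.map fun a => 1 - Polynomial.C a * Polynomial.X).prod * Polynomial.X ^ (N - d) := by
    conv_lhs => rw [← mul_one ((rts.map fun a => (X:ℂ[X]) - C a).prod),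
      show N = d + (N - d) from (Nat.add_sub_cancel' hdeg).symm]
    rw [Polynomial.reflect_mul _ _ hP (by simp : (1:ℂ[X]).natDegree ≤ N - d)]
    congr 1
    · rw [← hcard, reflect_multiset_prod]
    · rw [← C_1, Polynomial.reflect_C, C_1, one_mul]
  have key : f = Polynomial.C f.leadingCoeff *
      ((rts.map fun a => 1 - Polynomial.C a * Polynomial.X).prod * Polynomial.X ^ (N - d)) := by
    conv_lhs => rw [← hrefl, ← hfact]
    rw [Polynomial.reflect_C_mul, hreflP]
  have hQX : ((rts.map fun a => 1 - C a * X).prod * X ^ (N - d)) ≠ 0 := by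
    intro h
    exact hf0 (by rw [key, h, mul_zero])
  have hQ0 : (0:ℂ[X]) ∉ rts.map fun a => 1 - C a * X := by
    intro h
    obtain ⟨a, _, ha2⟩ := Multiset.mem_map.mp h
    have := congrArg (fun q : ℂ[X] => q.coeff 0) ha2
    simp at this
  have hroots : rts = (rts.bind fun a => ((1:ℂ[X]) - C a * X).roots)
      + Multiset.replicate (N - d) 0 := by
    conv_lhs => rw [hrts, key]
    rw [Polynomial.roots_C_mul _ ha,
      Polynomial.roots_mul hQX,
      Polynomial.roots_multiset_prod _ hQ0, Polynomial.roots_X_pow,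
      Multiset.nsmul_singleton, Multiset.bind_map]
  have hmem : ∀ a ∈ rts, ‖a‖ ≠ 1 := by
    intro a hai h1
    exact hcirc a h1 (Polynomial.isRoot_of_mem_roots hai)
  have hfun : ∀ a ∈ rts, Multiset.countP (fun z : ℂ => ‖z‖ < 1) (((1:ℂ[X]) - C a * X).roots)
      = if 1 < ‖a‖ then 1 else 0 := by
    intro a hai
    by_cases h0 : a = 0
    · subst h0; simp
    · have hrw : (1 : ℂ[X]) - C a * X = C (-a) * (X - C a⁻¹) := by
        rw [mul_sub, ← C_mul, neg_mul, mul_inv_cancel₀ h0, map_neg, map_neg, C_1]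
        ring
      rw [hrw, Polynomial.roots_C_mul _ (neg_ne_zero.mpr h0), Polynomial.roots_X_sub_C]
      have hpos : 0 < ‖a‖ := norm_pos_iff.mpr h0
      have hnorm : ‖a⁻¹‖ < 1 ↔ 1 < ‖a‖ := by rw [norm_inv]; exact inv_lt_one₀ hpos
      rw [Multiset.countP_eq_card_filter, Multiset.filter_singleton]
      by_cases h1 : 1 < ‖a‖
      · rw [if_pos h1, if_pos (hnorm.mpr h1)]; simp
      · rw [if_neg h1, if_neg (fun hc => h1 (hnorm.mp hc))]; simp
  have hcount := congrArg (Multiset.countP (fun z : ℂ => ‖z‖ < 1)) hroots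
  rw [Multiset.countP_add, countP_bind'] at hcount
  rw [Multiset.map_congr rfl hfun, sum_map_ite',
    countP_replicate' _ _ _ (by norm_num)] at hcount
  have htri : Multiset.countP (fun z : ℂ => ‖z‖ < 1) rts
      + Multiset.countP (fun a : ℂ => 1 < ‖a‖) rts = d := by
    have h1 : Multiset.countP (fun a : ℂ => 1 < ‖a‖) rts
        = Multiset.countP (fun z : ℂ => ¬ ‖z‖ < 1) rts := by
      refine Multiset.countP_congr rfl ?_
      intro x hx
      have hne := hmem x hx
      rw [eq_iff_iff]
      constructor
      · intro h; exact not_lt.mpr (le_of_lt h)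
      · intro h; rcases lt_or_gt_of_ne hne with hc | hc
        · exact absurd hc h
        · exact hc
    rw [h1]
    rw [Multiset.countP_eq_card_filter, Multiset.countP_eq_card_filter, ← Multiset.card_add,
      Multiset.filter_add_not, hcard]
  omega


private lemma eval_det_aux {I : Type*} [Fintype I] [DecidableEq I]
    (q : Matrix I I (Polynomial ℂ)) (z : ℂ) :
    (q.det).eval z = (q.map (Polynomial.eval z)).det := by
  simpa using RingHom.map_det (Polynomial.evalRingHom z) q

private lemma natDegree_det_le' {I : Type*} [Fintype I] [DecidableEq I]
    (q : Matrix I I (Polynomial ℂ)) (h : ∀ i j, (q i j).natDegree ≤ 1) :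
    q.det.natDegree ≤ Fintype.card I := by
  rw [Matrix.det_apply']
  refine Polynomial.natDegree_sum_le_of_forall_le _ _ ?_
  intro σ _
  refine le_trans (Polynomial.natDegree_mul_le) ?_
  rw [Polynomial.natDegree_intCast, zero_add]
  refine le_trans (Polynomial.natDegree_prod_le _ _) ?_
  calc ∑ i, (q (σ i) i).natDegree ≤ ∑ _i : I, 1 := Finset.sum_le_sum (fun i _ => h _ _)
  _ = Fintype.card I := by simp


private lemma mem_spectrum_of_eigen {m : ℕ} (H : Matrix (Fin m) (Fin m) ℂ) (μ : ℂ)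
    (v : Fin m → ℂ) (hv : v ≠ 0) (heig : H.mulVec v = μ • v) : μ ∈ spectrum ℂ H := by
  rw [spectrum.mem_iff, Algebra.algebraMap_eq_smul_one, Matrix.isUnit_iff_isUnit_det,
    isUnit_iff_ne_zero, not_not, ← Matrix.exists_mulVec_eq_zero_iff]
  refine ⟨v, hv, ?_⟩
  rw [Matrix.sub_mulVec, heig]
  have : (μ • (1 : Matrix (Fin m) (Fin m) ℂ)).mulVec v = μ • v := by
    rw [Matrix.smul_mulVec, Matrix.one_mulVec]
  rw [this, sub_self]

private lemma fixed_eq_zero {m : ℕ} (G2 R : Matrix (Fin m) (Fin m) ℂ)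
    (hspec : ∀ μ : ℂ, μ ∈ spectrum ℂ G2ᵀ → ‖μ‖ < 1)
    (hfix : G2ᵀ * R * G2 = R) : R = 0 := by
  by_contra hR
  let ℓ : Module.End ℂ (Matrix (Fin m) (Fin m) ℂ) := LinearMap.mulLeft ℂ G2ᵀ
  let rr : Module.End ℂ (Matrix (Fin m) (Fin m) ℂ) := LinearMap.mulRight ℂ G2
  let Φ : Module.End ℂ (Matrix (Fin m) (Fin m) ℂ) := ℓ ∘ₗ rr
  have hΦ : ∀ x : Matrix (Fin m) (Fin m) ℂ, Φ x = G2ᵀ * x * G2 := by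
    intro x
    simp only [Φ, ℓ, rr, LinearMap.comp_apply, LinearMap.mulLeft_apply,
      LinearMap.mulRight_apply]
    rw [mul_assoc]
  have hΦR : Φ R = R := by rw [hΦ, hfix]
  have hRE : R ∈ Module.End.eigenspace Φ 1 :=
    Module.End.mem_eigenspace_iff.mpr (by rw [hΦR, one_smul])
  have hEnontriv : Nontrivial (Module.End.eigenspace Φ 1) := by
    refine ⟨⟨⟨R, hRE⟩, ⟨0, (Module.End.eigenspace Φ 1).zero_mem⟩, ?_⟩⟩
    intro h
    exact hR (congrArg Subtype.val h)
  have hcomm : ∀ x ∈ Module.End.eigenspace Φ 1, ℓ x ∈ Module.End.eigenspace Φ 1 := by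
    intro x hx
    rw [Module.End.mem_eigenspace_iff, one_smul] at hx ⊢
    rw [hΦ] at hx
    show Φ (G2ᵀ * x) = G2ᵀ * x
    rw [hΦ, mul_assoc G2ᵀ (G2ᵀ * x) G2, hx]
  let ℓ' : Module.End ℂ (Module.End.eigenspace Φ 1) := ℓ.restrict hcomm
  obtain ⟨μ, hμ⟩ := Module.End.exists_eigenvalue ℓ'
  obtain ⟨v, hv⟩ := hμ.exists_hasEigenvector
  have hveq : G2ᵀ * (v : Matrix (Fin m) (Fin m) ℂ) = μ • (v : Matrix (Fin m) (Fin m) ℂ) := by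
    have h1 := hv.apply_eq_smul
    have h2 := congrArg Subtype.val h1
    simpa only [ℓ', LinearMap.restrict_apply, ℓ, LinearMap.mulLeft_apply,
      Submodule.coe_smul] using h2
  have hvE : Φ (v : Matrix (Fin m) (Fin m) ℂ) = (v : Matrix (Fin m) (Fin m) ℂ) := by
    have hm := v.2
    rw [Module.End.mem_eigenspace_iff] at hm
    simpa using hm
  have hvne : (v : Matrix (Fin m) (Fin m) ℂ) ≠ 0 := by
    intro h
    exact hv.right (by exact_mod_cast Subtype.ext h)
  have hμv : μ • ((v : Matrix (Fin m) (Fin m) ℂ) * G2) = (v : Matrix (Fin m) (Fin m) ℂ) := by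
    rw [← smul_mul_assoc, ← hveq, ← hΦ, hvE]
  have hμ0 : μ ≠ 0 := by
    rintro rfl
    rw [zero_smul] at hμv
    exact hvne hμv.symm
  have hvmul : (v : Matrix (Fin m) (Fin m) ℂ) * G2 = μ⁻¹ • (v : Matrix (Fin m) (Fin m) ℂ) := by
    calc (v : Matrix (Fin m) (Fin m) ℂ) * G2
        = μ⁻¹ • (μ • ((v : Matrix (Fin m) (Fin m) ℂ) * G2)) := by
          rw [smul_smul, inv_mul_cancel₀ hμ0, one_smul]
    _ = μ⁻¹ • (v : Matrix (Fin m) (Fin m) ℂ) := by rw [hμv]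
  have hcol : ∀ (w : Matrix (Fin m) (Fin m) ℂ) (ν : ℂ), w ≠ 0 → G2ᵀ * w = ν • w →
      ν ∈ spectrum ℂ G2ᵀ := by
    intro w ν hw hmul
    have hex : ∃ j, (fun i => w i j) ≠ 0 := by
      by_contra h
      push_neg at h
      apply hw
      ext i j
      have := congrFun (h j) i
      simpa using this
    obtain ⟨j, hj⟩ := hex
    refine mem_spectrum_of_eigen _ _ _ hj ?_
    ext i
    have := congrFun (congrFun hmul i) j
    simpa [Matrix.mul_apply, Matrix.mulVec, dotProduct] using this
  have h1 : μ ∈ spectrum ℂ G2ᵀ := hcol _ _ hvne hveq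
  have hvT : G2ᵀ * (v : Matrix (Fin m) (Fin m) ℂ)ᵀ
      = μ⁻¹ • (v : Matrix (Fin m) (Fin m) ℂ)ᵀ := by
    have := congrArg Matrix.transpose hvmul
    rwa [Matrix.transpose_mul, Matrix.transpose_smul] at this
  have hvTne : (v : Matrix (Fin m) (Fin m) ℂ)ᵀ ≠ 0 := by
    intro h
    apply hvne
    ext i j
    have := congrFun (congrFun h j) i
    simpa using this
  have h2 : μ⁻¹ ∈ spectrum ℂ G2ᵀ := hcol _ _ hvTne hvT
  have hlt1 := hspec μ h1
  have hlt2 := hspec μ⁻¹ h2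
  have hcontra : (1:ℝ) < 1 := by
    calc (1:ℝ) = ‖μ‖ * ‖μ⁻¹‖ := by rw [← norm_mul, mul_inv_cancel₀ hμ0, norm_one]
    _ < 1 * 1 := mul_lt_mul'' hlt1 hlt2 (norm_nonneg _) (norm_nonneg _)
    _ = 1 := by norm_num
  exact lt_irrefl 1 hcontra


/-- if the pencil `φ(z) = M + z Mᵀ` (with `M = [[C, D], [A, −B]]` real,
viewed over ℂ) is non-critical and `G` solves the quadratic matrix equation
`𝓐₋₁ + 𝓐₀ G + 𝓐₁ G² = 0` with spectral radius less than one, then the (1,1) and (2,1)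
blocks of `G` vanish, its (1,2) block `G₁` solves the ⊤-NARE, `Dᵀ − Bᵀ G₁` is
invertible, and the (2,2) block is `G₂ = −(Dᵀ − Bᵀ G₁)⁻¹ (A − B G₁)`. -/
theorem quadratic_solution_gives_tNARE_solution
    (n : ℕ) (A B C D : Matrix (Fin n) (Fin n) ℝ) :
    ∀ Ac Bc Cc Dc : Matrix (Fin n) (Fin n) ℂ,
      Ac = A.map (Complex.ofReal ·) → Bc = B.map (Complex.ofReal ·) →
      Cc = C.map (Complex.ofReal ·) → Dc = D.map (Complex.ofReal ·) →
      ∀ M Am1 A0 A1 : Matrix (Fin n ⊕ Fin n) (Fin n ⊕ Fin n) ℂ,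
        M = Matrix.fromBlocks Cc Dc Ac (-Bc) →
        Am1 = Matrix.fromBlocks 0 Cc 0 Ac →
        A0 = Matrix.fromBlocks Dc Ccᵀ (-Bc) Dcᵀ →
        A1 = Matrix.fromBlocks Acᵀ 0 (-Bcᵀ) 0 →
        (∀ z : ℂ, ‖z‖ = 1 → (M + z • Mᵀ).det ≠ 0) →
        ∀ G : Matrix (Fin n ⊕ Fin n) (Fin n ⊕ Fin n) ℂ,
          Am1 + A0 * G + A1 * G ^ 2 = 0 →
          spectralRadius ℂ G < 1 →
          G.toBlocks₁₁ = 0 ∧ G.toBlocks₂₁ = 0 ∧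
          Dc * G.toBlocks₁₂ + G.toBlocks₁₂ᵀ * Ac
            - G.toBlocks₁₂ᵀ * Bc * G.toBlocks₁₂ + Cc = 0 ∧
          IsUnit (Dcᵀ - Bcᵀ * G.toBlocks₁₂) ∧
          G.toBlocks₂₂ = -(Dcᵀ - Bcᵀ * G.toBlocks₁₂)⁻¹ * (Ac - Bc * G.toBlocks₁₂) := by
  classical
  intro Ac Bc Cc Dc hAc hBc hCc hDc M Am1 A0 A1 hM hAm1 hA0 hA1 hnc G heq hsr
  clear hAc hBc hCc hDc
  set Sm : Matrix (Fin n ⊕ Fin n) (Fin n ⊕ Fin n) ℂ := A0 + A1 * G with hSm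
  -- rewritten quadratic equation
  have hAm1v : Am1 = -(A0 * G) - A1 * (G * G) := by
    have h2 : Am1 + A0 * G + A1 * (G * G) = 0 := by rw [← pow_two]; exact heq
    calc Am1 = Am1 + A0 * G + A1 * (G * G) - A0 * G - A1 * (G * G) := by abel
    _ = -(A0 * G) - A1 * (G * G) := by rw [h2]; abel
  -- factorization of the quadratic pencil
  have hQfact : ∀ z : ℂ, Am1 + z • A0 + (z*z) • A1
      = (Sm + z • A1) * (z • (1 : Matrix (Fin n ⊕ Fin n) (Fin n ⊕ Fin n) ℂ) - G) := by
    intro z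
    rw [hAm1v, hSm]
    simp only [add_mul, mul_sub, smul_mul_assoc, mul_smul_comm, mul_one, mul_assoc]
    module
  have hdet1 : ∀ z : ℂ, (Am1 + z • A0 + (z*z) • A1).det
      = (Sm + z • A1).det * (z • (1 : Matrix (Fin n ⊕ Fin n) (Fin n ⊕ Fin n) ℂ) - G).det := by
    intro z
    rw [hQfact z, Matrix.det_mul]
  -- the palindromic pencil identity
  have hPi : ∀ z : ℂ, (M + z • Mᵀ) *
      (Matrix.fromBlocks (0 : Matrix (Fin n) (Fin n) ℂ) 1 (z • 1) 0)
      = Am1 + z • A0 + (z*z) • A1 := by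
    intro z
    subst hM hAm1 hA0 hA1
    rw [Matrix.fromBlocks_transpose, Matrix.transpose_neg]
    rw [Matrix.fromBlocks_smul, Matrix.fromBlocks_add, Matrix.fromBlocks_multiply]
    rw [Matrix.fromBlocks_smul, Matrix.fromBlocks_smul, Matrix.fromBlocks_add,
      Matrix.fromBlocks_add]
    rw [Matrix.fromBlocks_inj]
    refine ⟨?_, ?_, ?_, ?_⟩ <;>
      simp only [mul_zero, mul_smul_comm, mul_one, add_mul, smul_mul_assoc,
        neg_mul, smul_neg, neg_add, mul_zero, add_zero, zero_add, smul_zero] <;>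
      try module
  -- determinant of the antidiagonal block matrix
  set J : Matrix (Fin n ⊕ Fin n) (Fin n ⊕ Fin n) ℂ :=
    Matrix.fromBlocks 0 1 1 0 with hJ
  have hJJ : J * J = 1 := by
    rw [hJ, Matrix.fromBlocks_multiply]
    simp [Matrix.fromBlocks_one]
  have hJdet : J.det * J.det = 1 := by
    rw [← Matrix.det_mul, hJJ, Matrix.det_one]
  have hJdet0 : J.det ≠ 0 := by
    intro h
    rw [h, mul_zero] at hJdet
    exact zero_ne_one hJdet
  have hdetPi : ∀ z : ℂ,
      (Matrix.fromBlocks (0 : Matrix (Fin n) (Fin n) ℂ) (1 : Matrix (Fin n) (Fin n) ℂ)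
        (z • (1 : Matrix (Fin n) (Fin n) ℂ)) (0 : Matrix (Fin n) (Fin n) ℂ)).det
        = z ^ n * J.det := by
    intro z
    have hfac : Matrix.fromBlocks (0 : Matrix (Fin n) (Fin n) ℂ) (1 : Matrix (Fin n) (Fin n) ℂ)
        (z • (1 : Matrix (Fin n) (Fin n) ℂ)) (0 : Matrix (Fin n) (Fin n) ℂ)
        = J * Matrix.fromBlocks (z • (1 : Matrix (Fin n) (Fin n) ℂ)) 0 0
            (1 : Matrix (Fin n) (Fin n) ℂ) := by
      rw [hJ, Matrix.fromBlocks_multiply]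
      simp
    rw [hfac, Matrix.det_mul, Matrix.det_fromBlocks_zero₂₁, Matrix.det_one, mul_one,
      Matrix.det_smul, Matrix.det_one, mul_one]
    simp [mul_comm]
  have hQdet : ∀ z : ℂ, (Am1 + z • A0 + (z*z) • A1).det
      = (M + z • Mᵀ).det * (z ^ n * J.det) := by
    intro z
    rw [← hPi z, Matrix.det_mul, hdetPi]
  have hpal : ∀ z : ℂ, z ≠ 0 →
      (M + z • Mᵀ).det = z ^ (n + n) * (M + z⁻¹ • Mᵀ).det := by
    intro z hz
    conv_lhs => rw [← Matrix.det_transpose]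
    rw [Matrix.transpose_add, Matrix.transpose_smul, Matrix.transpose_transpose]
    have hrw : Mᵀ + z • M = z • (M + z⁻¹ • Mᵀ) := by
      rw [smul_add, smul_smul, mul_inv_cancel₀ hz, one_smul]
      abel
    rw [hrw, Matrix.det_smul]
    congr 2
    simp
  -- polynomial versions
  set ψp : Polynomial ℂ :=
    (Sm.map Polynomial.C + (Polynomial.X : Polynomial ℂ) • A1.map Polynomial.C).det with hψp
  set χp : Polynomial ℂ :=
    ((Polynomial.X : Polynomial ℂ) • (1 : Matrix (Fin n ⊕ Fin n) (Fin n ⊕ Fin n) (Polynomial ℂ))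
      - G.map Polynomial.C).det with hχp
  have hψeval : ∀ z : ℂ, ψp.eval z = (Sm + z • A1).det := by
    intro z
    rw [hψp, eval_det_aux]
    congr 1
    ext i j
    simp only [Matrix.map_apply, Matrix.add_apply, Matrix.smul_apply, smul_eq_mul,
      Polynomial.eval_add, Polynomial.eval_mul, Polynomial.eval_X, Polynomial.eval_C]
  have hχeval : ∀ z : ℂ, χp.eval z
      = (z • (1 : Matrix (Fin n ⊕ Fin n) (Fin n ⊕ Fin n) ℂ) - G).det := by
    intro z
    rw [hχp, eval_det_aux]
    congr 1
    ext i j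
    simp only [Matrix.map_apply, Matrix.sub_apply, Matrix.smul_apply, Matrix.one_apply,
      smul_eq_mul, Polynomial.eval_sub, Polynomial.eval_mul, Polynomial.eval_X,
      Polynomial.eval_C]
    by_cases h : i = j <;> simp [h]
  set Fp : Polynomial ℂ := ψp * χp with hFp
  have hFeval : ∀ z : ℂ, Fp.eval z = (Am1 + z • A0 + (z*z) • A1).det := by
    intro z
    rw [hFp, Polynomial.eval_mul, hψeval, hχeval, hdet1]
  have hFcirc : ∀ z : ℂ, ‖z‖ = 1 → Fp.eval z ≠ 0 := by
    intro z hz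
    rw [hFeval, hQdet]
    have hz0 : z ≠ 0 := by
      intro h
      rw [h, norm_zero] at hz
      norm_num at hz
    exact mul_ne_zero (hnc z hz) (mul_ne_zero (pow_ne_zero _ hz0) hJdet0)
  have hF0 : Fp ≠ 0 := by
    intro h
    exact hFcirc 1 (by norm_num) (by rw [h, Polynomial.eval_zero])
  have hψ0 : ψp ≠ 0 := by
    intro h
    exact hF0 (by rw [hFp, h, zero_mul])
  have hχ0 : χp ≠ 0 := by
    intro h
    exact hF0 (by rw [hFp, h, mul_zero])
  have hψdeg : ψp.natDegree ≤ n + n := by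
    have := natDegree_det_le'
      (Sm.map Polynomial.C + (Polynomial.X : Polynomial ℂ) • A1.map Polynomial.C) ?_
    · simpa using this
    · intro i j
      have : (Sm.map Polynomial.C + (Polynomial.X : Polynomial ℂ) • A1.map Polynomial.C) i j
          = Polynomial.C (Sm i j) + Polynomial.X * Polynomial.C (A1 i j) := by
        simp [Matrix.map_apply, Matrix.add_apply, Matrix.smul_apply, smul_eq_mul]
      rw [this]
      refine le_trans (Polynomial.natDegree_add_le _ _) ?_
      simp only [Polynomial.natDegree_C]
      refine max_le (by norm_num) (le_trans (Polynomial.natDegree_mul_le) ?_)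
      simp [Polynomial.natDegree_X, Polynomial.natDegree_C]
  have hχcharpoly : χp = G.charpoly := by
    rw [hχp, Matrix.charpoly]
    congr 1
    ext i j
    by_cases h : i = j
    · subst h
      rw [Matrix.charmatrix_apply_eq]
      simp [Matrix.sub_apply, Matrix.smul_apply, Matrix.one_apply, smul_eq_mul]
    · rw [Matrix.charmatrix_apply_ne _ _ _ h]
      simp [Matrix.sub_apply, Matrix.smul_apply, Matrix.one_apply, h, smul_eq_mul]
  have hχdeg : χp.natDegree = n + n := by
    rw [hχcharpoly, Matrix.charpoly_natDegree_eq_dim]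
    simp
  have hFdeg : Fp.natDegree ≤ n + n + (n + n) := by
    rw [hFp, Polynomial.natDegree_mul hψ0 hχ0, hχdeg]
    omega
  have hfun : ∀ z : ℂ, z ≠ 0 → Fp.eval z = z ^ (n + n + (n + n)) * Fp.eval z⁻¹ := by
    intro z hz
    rw [hFeval, hFeval, hQdet, hQdet, hpal z hz]
    field_simp
    have hzn : z ^ n * (z ^ n)⁻¹ = 1 := mul_inv_cancel₀ (pow_ne_zero _ hz)
    rw [one_div, inv_pow]
    linear_combination (-(z ^ (n + n + n) * (M + z⁻¹ • Mᵀ).det)) * hzn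
  have hrefl : Polynomial.reflect (n + n + (n + n)) Fp = Fp := by
    apply Polynomial.eq_of_infinite_eval_eq
    have hinf : ({(0:ℂ)}ᶜ : Set ℂ).Infinite := (Set.finite_singleton (0:ℂ)).infinite_compl
    refine hinf.mono ?_
    intro z hz
    have hz0 : z ≠ 0 := hz
    simp only [Set.mem_setOf_eq]
    letI : Invertible (z⁻¹) := invertibleOfNonzero (inv_ne_zero hz0)
    have hev := Polynomial.eval₂_reflect_mul_pow (RingHom.id ℂ) z⁻¹ (n + n + (n + n)) Fp hFdeg
    have hinv : (⅟(z⁻¹) : ℂ) = z := by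
      rw [invOf_eq_inv, inv_inv]
    have hA : (Polynomial.reflect (n + n + (n + n)) Fp).eval z * (z⁻¹) ^ (n + n + (n + n))
        = Fp.eval z⁻¹ := by
      rw [hinv] at hev
      simpa [Polynomial.eval₂_id] using hev
    calc (Polynomial.reflect (n + n + (n + n)) Fp).eval z
        = (Polynomial.reflect (n + n + (n + n)) Fp).eval z
            * ((z⁻¹) ^ (n + n + (n + n)) * z ^ (n + n + (n + n))) := by
          rw [inv_pow, inv_mul_cancel₀ (pow_ne_zero _ hz0), mul_one]
    _ = Fp.eval z⁻¹ * z ^ (n + n + (n + n)) := by rw [← mul_assoc, hA]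
    _ = Fp.eval z := by rw [hfun z hz0]; ring
  have hcount := two_mul_countP_roots hF0 hFdeg hrefl hFcirc
  have hrootsF : Fp.roots = ψp.roots + χp.roots := by
    rw [hFp]
    exact Polynomial.roots_mul (mul_ne_zero hψ0 hχ0)
  have hspecG : ∀ μ : ℂ,
      Matrix.det (μ • (1 : Matrix (Fin n ⊕ Fin n) (Fin n ⊕ Fin n) ℂ) - G) = 0 → ‖μ‖ < 1 := by
    intro μ hdet
    have hmem : μ ∈ spectrum ℂ G := by
      rw [spectrum.mem_iff, Algebra.algebraMap_eq_smul_one]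
      intro hu
      rw [Matrix.isUnit_iff_isUnit_det, isUnit_iff_ne_zero] at hu
      exact hu hdet
    have hle : (‖μ‖₊ : ENNReal) ≤ spectralRadius ℂ G :=
      le_iSup₂ (f := fun k (_ : k ∈ spectrum ℂ G) => (‖k‖₊ : ENNReal)) μ hmem
    have hlt : (‖μ‖₊ : ENNReal) < 1 := lt_of_le_of_lt hle hsr
    have h2 : ‖μ‖₊ < 1 := by exact_mod_cast hlt
    have h3 := NNReal.coe_lt_coe.mpr h2
    simpa using h3
  have hχall : ∀ z ∈ χp.roots, ‖z‖ < 1 := by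
    intro z hzr
    apply hspecG
    have hroot := Polynomial.isRoot_of_mem_roots hzr
    rw [Polynomial.IsRoot] at hroot
    rw [← hχeval z]
    exact hroot
  have hχcount : Multiset.countP (fun z : ℂ => ‖z‖ < 1) χp.roots = n + n := by
    rw [Multiset.countP_eq_card_filter, Multiset.filter_eq_self.mpr hχall]
    have hsplitχ : χp.Splits := IsAlgClosed.splits χp
    have hcardχ := hsplitχ.natDegree_eq_card_roots
    omega
  have hψcount : Multiset.countP (fun z : ℂ => ‖z‖ < 1) ψp.roots = 0 := by
    rw [hrootsF, Multiset.countP_add] at hcount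
    omega
  have hSmdet : Sm.det ≠ 0 := by
    intro h0
    have hev0 : ψp.eval 0 = 0 := by
      rw [hψeval]
      simpa using h0
    have h0r : (0:ℂ) ∈ ψp.roots := (Polynomial.mem_roots hψ0).mpr hev0
    have hpos : 0 < Multiset.countP (fun z : ℂ => ‖z‖ < 1) ψp.roots := by
      rw [Multiset.countP_pos]
      exact ⟨0, h0r, by norm_num⟩
    omega
  have hSmunit : IsUnit Sm := by
    rw [Matrix.isUnit_iff_isUnit_det, isUnit_iff_ne_zero]
    exact hSmdet
  -- the first block column of G vanishes
  set E : Matrix (Fin n ⊕ Fin n) (Fin n ⊕ Fin n) ℂ :=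
    Matrix.fromBlocks (1 : Matrix (Fin n) (Fin n) ℂ) 0 0 0 with hE
  have hAm1E : Am1 * E = 0 := by
    rw [hAm1, hE, Matrix.fromBlocks_multiply]
    simp
  have hSmGE : Sm * (G * E) = 0 := by
    have hexp : Sm * (G * E) = (Am1 + A0 * G + A1 * G ^ 2) * E - Am1 * E := by
      rw [hSm, pow_two]
      noncomm_ring
    rw [hexp, heq, hAm1E]
    simp
  have hGE : G * E = 0 := by
    have h2 := congrArg (fun X => Sm⁻¹ * X) hSmGE
    simpa [← Matrix.mul_assoc,
      Matrix.nonsing_inv_mul _ ((Matrix.isUnit_iff_isUnit_det Sm).mp hSmunit)] using h2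
  have hGblocks := Matrix.fromBlocks_toBlocks G
  have hGE' : Matrix.fromBlocks G.toBlocks₁₁ 0 G.toBlocks₂₁ 0
      = (0 : Matrix (Fin n ⊕ Fin n) (Fin n ⊕ Fin n) ℂ) := by
    calc Matrix.fromBlocks G.toBlocks₁₁ 0 G.toBlocks₂₁ 0
        = Matrix.fromBlocks G.toBlocks₁₁ G.toBlocks₁₂ G.toBlocks₂₁ G.toBlocks₂₂ * E := by
          rw [hE, Matrix.fromBlocks_multiply]
          simp
    _ = G * E := by rw [hGblocks]
    _ = 0 := hGE
  rw [← Matrix.fromBlocks_zero, Matrix.fromBlocks_inj] at hGE'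
  obtain ⟨h11, -, h21, -⟩ := hGE'
  have hGform : G = Matrix.fromBlocks 0 G.toBlocks₁₂ 0 G.toBlocks₂₂ := by
    conv_lhs => rw [← hGblocks]
    rw [h11, h21]
  set G1 := G.toBlocks₁₂ with hG1
  set G2 := G.toBlocks₂₂ with hG2
  -- block equations
  have heqB := heq
  rw [hAm1, hA0, hA1, hGform, pow_two, Matrix.fromBlocks_multiply,
    Matrix.fromBlocks_multiply, Matrix.fromBlocks_multiply, Matrix.fromBlocks_add,
    Matrix.fromBlocks_add, ← Matrix.fromBlocks_zero, Matrix.fromBlocks_inj] at heqB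
  obtain ⟨-, heq12, -, heq22⟩ := heqB
  simp only [Matrix.mul_zero, Matrix.zero_mul, mul_zero, zero_mul, add_zero, zero_add] at heq12 heq22
  set R : Matrix (Fin n) (Fin n) ℂ := Dc * G1 + G1ᵀ * Ac - G1ᵀ * Bc * G1 + Cc with hRdef
  have hRT : Rᵀ = G1ᵀ * Dcᵀ + Acᵀ * G1 - G1ᵀ * (Bcᵀ * G1) + Ccᵀ := by
    rw [hRdef]
    simp only [Matrix.transpose_add, Matrix.transpose_sub, Matrix.transpose_mul,
      Matrix.transpose_transpose]
  have hR2 : R + Rᵀ * G2 = 0 := by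
    rw [hRT, hRdef]
    calc Dc * G1 + G1ᵀ * Ac - G1ᵀ * Bc * G1 + Cc
          + (G1ᵀ * Dcᵀ + Acᵀ * G1 - G1ᵀ * (Bcᵀ * G1) + Ccᵀ) * G2
        = (Cc + (Dc * G1 + Ccᵀ * G2) + Acᵀ * (G1 * G2))
          + G1ᵀ * (Ac + (-Bc * G1 + Dcᵀ * G2) + -Bcᵀ * (G1 * G2)) := by noncomm_ring
    _ = 0 := by rw [heq12, heq22]; simp
  have hRa : R = -(Rᵀ * G2) := eq_neg_of_add_eq_zero_left hR2
  have hconj := congrArg Matrix.transpose hR2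
  simp only [Matrix.transpose_add, Matrix.transpose_mul, Matrix.transpose_transpose,
    Matrix.transpose_zero] at hconj
  have hRTa : Rᵀ = -(G2ᵀ * R) := eq_neg_of_add_eq_zero_left hconj
  have hfix : G2ᵀ * R * G2 = R := by
    calc G2ᵀ * R * G2 = -(-(G2ᵀ * R) * G2) := by rw [neg_mul, neg_neg]
    _ = -(Rᵀ * G2) := by rw [← hRTa]
    _ = R := hRa.symm
  have hspecG2 : ∀ μ : ℂ, μ ∈ spectrum ℂ G2ᵀ → ‖μ‖ < 1 := by
    intro μ hmem
    apply hspecG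
    rw [spectrum.mem_iff, Algebra.algebraMap_eq_smul_one, Matrix.isUnit_iff_isUnit_det,
      isUnit_iff_ne_zero, not_not] at hmem
    have hdet2 : (μ • (1 : Matrix (Fin n) (Fin n) ℂ) - G2).det = 0 := by
      rw [← Matrix.det_transpose, Matrix.transpose_sub, Matrix.transpose_smul,
        Matrix.transpose_one]
      exact hmem
    have hbig : μ • (1 : Matrix (Fin n ⊕ Fin n) (Fin n ⊕ Fin n) ℂ) - G
        = Matrix.fromBlocks (μ • 1) (-G1) 0 (μ • 1 - G2) := by
      rw [hGform, ← Matrix.fromBlocks_one, Matrix.fromBlocks_smul, sub_eq_add_neg,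
        Matrix.fromBlocks_neg, Matrix.fromBlocks_add]
      congr 1 <;> simp [sub_eq_add_neg]
    rw [hbig, Matrix.det_fromBlocks_zero₂₁, hdet2, mul_zero]
  have hR0 : R = 0 := fixed_eq_zero G2 R hspecG2 hfix
  have hRT0 : Rᵀ = 0 := by rw [hR0, Matrix.transpose_zero]
  have hCt : Ccᵀ + Acᵀ * G1 = -G1ᵀ * (Dcᵀ - Bcᵀ * G1) := by
    have h := hRT0
    rw [hRT] at h
    calc Ccᵀ + Acᵀ * G1
        = (G1ᵀ * Dcᵀ + Acᵀ * G1 - G1ᵀ * (Bcᵀ * G1) + Ccᵀ) + -G1ᵀ * (Dcᵀ - Bcᵀ * G1) := by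
          noncomm_ring
    _ = -G1ᵀ * (Dcᵀ - Bcᵀ * G1) := by rw [h, zero_add]
  have hSmB : Sm = Matrix.fromBlocks Dc (-G1ᵀ) (-Bc) 1
      * Matrix.fromBlocks 1 0 0 (Dcᵀ - Bcᵀ * G1) := by
    rw [Matrix.fromBlocks_multiply, hSm, hA0, hA1, hGform, Matrix.fromBlocks_multiply,
      Matrix.fromBlocks_add, Matrix.fromBlocks_inj]
    refine ⟨by simp, ?_, by simp, ?_⟩
    · simp only [Matrix.mul_zero, mul_zero, zero_add, add_zero, Matrix.zero_mul, zero_mul]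
      exact hCt
    · simp [sub_eq_add_neg]
  have hTdet : (Dcᵀ - Bcᵀ * G1).det ≠ 0 := by
    intro h
    apply hSmdet
    rw [hSmB, Matrix.det_mul, Matrix.det_fromBlocks_zero₂₁, Matrix.det_one, one_mul, h,
      mul_zero]
  have hTunit : IsUnit (Dcᵀ - Bcᵀ * G1) := by
    rw [Matrix.isUnit_iff_isUnit_det, isUnit_iff_ne_zero]
    exact hTdet
  have hTG2 : (Dcᵀ - Bcᵀ * G1) * G2 = -(Ac - Bc * G1) := by
    calc (Dcᵀ - Bcᵀ * G1) * G2
        = -(Ac - Bc * G1) + (Ac + (-Bc * G1 + Dcᵀ * G2) + -Bcᵀ * (G1 * G2)) := by noncomm_ring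
    _ = -(Ac - Bc * G1) := by rw [heq22, add_zero]
  have hG2eq : G2 = -(Dcᵀ - Bcᵀ * G1)⁻¹ * (Ac - Bc * G1) := by
    have h3 := congrArg (fun X => (Dcᵀ - Bcᵀ * G1)⁻¹ * X) hTG2
    rw [← Matrix.mul_assoc,
      Matrix.nonsing_inv_mul _ ((Matrix.isUnit_iff_isUnit_det _).mp hTunit),
      Matrix.one_mul] at h3
    rw [h3, Matrix.mul_neg, Matrix.neg_mul]
  exact ⟨h11, h21, hR0, hTunit, hG2eq⟩
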